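/- (Lemma 6.3: the case v₂(α²) < v₂(4yz).) For a natural number k, consider subsets of ℤ_[2]³ (coordinates (α, y, z)) all constrained by: y is a unit, ‖α²‖ > ‖4yz‖, and α² + 4yz = 2^k·u for some unit u ∈ ℤ_[2]. Then: (1) with the additional constraint 8 ∣ u − 1, the μ³-measure equals 2^{-(3k/2+3)} if k is even and 0 if k is odd; (2) with the additional constraint 8 ∣ u − 5, the μ³-measure equals 2^{-(3k/2+3)} if k is even and 0 if k is odd; (3) with the additional constraint 4 ∣ u − 3, the μ³-measure equals 2^{-(3k/2+2)} if k is even and k ≥ 2, and 0 if k is odd or k = 0; (4) with no additional constraint on u, the μ³-measure equals 0 whenever k is odd. -/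

import Mathlib

open MeasureTheory PadicInt
open scoped ENNReal

noncomputable instance : MeasurableSpace ℤ_[2] := borel ℤ_[2]
instance : BorelSpace ℤ_[2] := ⟨rfl⟩


lemma dvd_iff_norm_le (n : ℕ) (x : ℤ_[2]) : (2:ℤ_[2])^n ∣ x ↔ ‖x‖ ≤ (2:ℝ)^(-(n:ℤ)) := by
  rw [show ((2:ℝ)) = ((2:ℕ):ℝ) by norm_num, PadicInt.norm_le_pow_iff_mem_span_pow,
    Ideal.mem_span_singleton]
  norm_num

lemma ball_eq2 (n : ℕ) :
    {x : ℤ_[2] | (2:ℤ_[2])^n ∣ x} = Metric.closedBall 0 ((2:ℝ)^(-(n:ℤ))) := by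
  ext x
  simp [Metric.mem_closedBall, dist_eq_norm, dvd_iff_norm_le]

lemma meas_ball (μ : Measure ℤ_[2]) [μ.IsAddHaarMeasure] [IsProbabilityMeasure μ] (n : ℕ) :
    μ {x : ℤ_[2] | (2:ℤ_[2])^n ∣ x} = ((2:ℝ≥0∞)^n)⁻¹ := by
  haveI : NeZero (2^n) := ⟨pow_ne_zero n two_ne_zero⟩
  set B := {x : ℤ_[2] | (2:ℤ_[2])^n ∣ x} with hB
  have hBmeas : MeasurableSet B := by
    rw [hB, ball_eq2]; exact measurableSet_closedBall
  have hker : ∀ x : ℤ_[2], x ∈ B ↔ PadicInt.toZModPow n x = 0 := by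
    intro x
    rw [hB, Set.mem_setOf_eq, ← RingHom.mem_ker, PadicInt.ker_toZModPow,
      Ideal.mem_span_singleton]
    norm_num
  have hfib : ∀ c : ZMod (2^n),
      (PadicInt.toZModPow n) ⁻¹' {c} = (· + (((-c).val : ℕ) : ℤ_[2])) ⁻¹' B := by
    intro c
    have hv : (PadicInt.toZModPow n) ((((-c).val : ℕ)):ℤ_[2]) = -c := by
      rw [map_natCast, ZMod.natCast_val, ZMod.cast_id]
    ext x
    simp only [Set.mem_preimage, Set.mem_singleton_iff, hker, map_add, hv, add_neg_eq_zero]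
  have hdisj : Pairwise (Function.onFun Disjoint
      fun c : ZMod (2^n) => (PadicInt.toZModPow n) ⁻¹' {c}) := by
    intro a b hab
    simp only [Function.onFun, Set.disjoint_left]
    rintro x rfl rfl
    exact hab rfl
  have hmeas : ∀ c : ZMod (2^n), MeasurableSet ((PadicInt.toZModPow n) ⁻¹' {c}) := by
    intro c; rw [hfib]; exact hBmeas.preimage (measurable_add_const _)
  have hcover : (⋃ c : ZMod (2^n), (PadicInt.toZModPow n) ⁻¹' {c}) = Set.univ := by
    ext x; simp
  have heach : ∀ c : ZMod (2^n), μ ((PadicInt.toZModPow n) ⁻¹' {c}) = μ B := by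
    intro c; rw [hfib]
    exact measure_preimage_add_right μ _ B
  have hsum : (1 : ℝ≥0∞) = ((2:ℕ)^n : ℝ≥0∞) * μ B := by
    rw [← measure_univ (μ := μ), ← hcover, measure_iUnion hdisj hmeas, tsum_fintype]
    simp only [heach, Finset.sum_const, Finset.card_univ, ZMod.card, nsmul_eq_mul]
    push_cast
    ring
  have h2 : ((2:ℕ)^n : ℝ≥0∞) ≠ 0 := by positivity
  have h2' : ((2:ℕ)^n : ℝ≥0∞) ≠ ⊤ := by
    exact_mod_cast ENNReal.natCast_ne_top _
  calc μ B = (((2:ℕ)^n : ℝ≥0∞))⁻¹ * (((2:ℕ)^n : ℝ≥0∞) * μ B) := by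
        rw [← mul_assoc, ENNReal.inv_mul_cancel h2 h2', one_mul]
    _ = ((2:ℝ≥0∞)^n)⁻¹ := by rw [← hsum, mul_one]; norm_num

lemma coset_measurable (n : ℕ) (c : ℤ_[2]) :
    MeasurableSet {x : ℤ_[2] | (2:ℤ_[2])^n ∣ x - c} := by
  have h : {x : ℤ_[2] | (2:ℤ_[2])^n ∣ x - c} = (· + (-c)) ⁻¹' {x | (2:ℤ_[2])^n ∣ x} := by
    ext x; simp [sub_eq_add_neg]
  rw [h, ball_eq2]
  exact measurableSet_closedBall.preimage (measurable_add_const _)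

lemma meas_coset (μ : Measure ℤ_[2]) [μ.IsAddHaarMeasure] [IsProbabilityMeasure μ]
    (n : ℕ) (c : ℤ_[2]) :
    μ {x : ℤ_[2] | (2:ℤ_[2])^n ∣ x - c} = ((2:ℝ≥0∞)^n)⁻¹ := by
  have h : {x : ℤ_[2] | (2:ℤ_[2])^n ∣ x - c} = (· + (-c)) ⁻¹' {x | (2:ℤ_[2])^n ∣ x} := by
    ext x; simp [sub_eq_add_neg]
  rw [h, measure_preimage_add_right, meas_ball]

lemma norm_eq_iff_dvd (m : ℕ) (x : ℤ_[2]) :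
    ‖x‖ = (2:ℝ)^(-(m:ℤ)) ↔ ((2:ℤ_[2])^m ∣ x ∧ ¬ (2:ℤ_[2])^(m+1) ∣ x) := by
  rw [dvd_iff_norm_le, dvd_iff_norm_le]
  constructor
  · intro h
    refine ⟨le_of_eq h, ?_⟩
    rw [h]
    push_neg
    apply zpow_lt_zpow_right₀ (by norm_num)
    omega
  · rintro ⟨h1, h2⟩
    refine le_antisymm h1 ?_
    by_contra hlt
    push_neg at hlt
    have key := PadicInt.norm_le_pow_iff_norm_lt_pow_add_one x (-((m:ℤ)+1))
    rw [show (-((m:ℤ)+1)+1) = -(m:ℤ) by ring] at key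
    norm_num at key
    apply h2
    rw [show (-((m+1:ℕ):ℤ)) = -1 + -(m:ℤ) by push_cast; ring]
    exact key.mpr (by simpa [zpow_neg] using hlt)

lemma sphere_measurable (m : ℕ) : MeasurableSet {x : ℤ_[2] | ‖x‖ = (2:ℝ)^(-(m:ℤ))} :=
  (measurableSet_eq_fun (continuous_norm.measurable) measurable_const)

lemma meas_sphere (μ : Measure ℤ_[2]) [μ.IsAddHaarMeasure] [IsProbabilityMeasure μ] (m : ℕ) :
    μ {x : ℤ_[2] | ‖x‖ = (2:ℝ)^(-(m:ℤ))} = ((2:ℝ≥0∞)^(m+1))⁻¹ := by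
  have hset : {x : ℤ_[2] | ‖x‖ = (2:ℝ)^(-(m:ℤ))}
      = {x : ℤ_[2] | (2:ℤ_[2])^m ∣ x} \ {x : ℤ_[2] | (2:ℤ_[2])^(m+1) ∣ x} := by
    ext x; simp only [Set.mem_setOf_eq, Set.mem_diff, norm_eq_iff_dvd]
  have hsub : {x : ℤ_[2] | (2:ℤ_[2])^(m+1) ∣ x} ⊆ {x : ℤ_[2] | (2:ℤ_[2])^m ∣ x} := by
    intro x hx
    exact dvd_trans (pow_dvd_pow 2 (by omega)) hx
  have hm1 : MeasurableSet {x : ℤ_[2] | (2:ℤ_[2])^(m+1) ∣ x} := by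
    rw [ball_eq2]; exact measurableSet_closedBall
  rw [hset, measure_diff hsub hm1.nullMeasurableSet (measure_ne_top μ _), meas_ball, meas_ball,
    ENNReal.inv_pow, ENNReal.inv_pow]
  apply ENNReal.sub_eq_of_eq_add (by simp)
  rw [pow_succ, ← mul_add, ENNReal.inv_two_add_inv_two, mul_one]

lemma unit_iff_not_dvd (a : ℤ_[2]) : IsUnit a ↔ ¬ (2:ℤ_[2]) ∣ a := by
  rw [PadicInt.isUnit_iff, show (2:ℤ_[2]) = ((2:ℕ):ℤ_[2]) by norm_num,
    ← PadicInt.norm_lt_one_iff_dvd, not_lt]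
  constructor
  · intro h; exact le_of_eq h.symm
  · intro h; exact le_antisymm (PadicInt.norm_le_one a) h

lemma two_dvd_iff_toZMod (x : ℤ_[2]) : (2:ℤ_[2]) ∣ x ↔ PadicInt.toZMod x = 0 := by
  rw [← RingHom.mem_ker, PadicInt.ker_toZMod, PadicInt.maximalIdeal_eq_span_p,
    Ideal.mem_span_singleton]
  norm_num

lemma two_dvd_mul_succ (b : ℤ_[2]) : (2:ℤ_[2]) ∣ b * (b + 1) := by
  rw [two_dvd_iff_toZMod, map_mul, map_add, map_one]
  have : ∀ t : ZMod 2, t * (t + 1) = 0 := by decide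
  exact this _

lemma unit_sub_one_even {a : ℤ_[2]} (ha : IsUnit a) : (2:ℤ_[2]) ∣ a - 1 := by
  rw [unit_iff_not_dvd, two_dvd_iff_toZMod] at ha
  rw [two_dvd_iff_toZMod, map_sub, map_one]
  have : ∀ t : ZMod 2, ¬ t = 0 → t - 1 = 0 := by decide
  exact this _ ha

lemma unit_sq_sub_one {a : ℤ_[2]} (ha : IsUnit a) : (8:ℤ_[2]) ∣ a^2 - 1 := by
  obtain ⟨b, hb⟩ := unit_sub_one_even ha
  have ha1 : a = 2*b + 1 := by rw [← hb]; ring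
  obtain ⟨c, hc⟩ := two_dvd_mul_succ b
  exact ⟨c, by rw [ha1]; linear_combination 4*hc⟩

lemma norm_add_eq {a b : ℤ_[2]} (h : ‖b‖ < ‖a‖) : ‖a + b‖ = ‖a‖ := by
  have h1 : ‖a + b‖ ≤ ‖a‖ := (PadicInt.nonarchimedean a b).trans (by rw [max_eq_left h.le])
  refine le_antisymm h1 ?_
  have h2 : ‖a‖ ≤ max ‖a+b‖ ‖b‖ := by
    have := PadicInt.nonarchimedean (a+b) (-b)
    simpa using this
  rcases le_max_iff.mp h2 with h3 | h3
  · exact h3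
  · exact absurd h3 (not_le.mpr h)

lemma norm_two_pow (k : ℕ) : ‖(2:ℤ_[2])^k‖ = (2:ℝ)^(-(k:ℤ)) := by
  have := PadicInt.norm_p_pow (p := 2) k
  norm_num at this ⊢
  exact this

lemma key_norm {α y z u : ℤ_[2]} {k : ℕ} (hu : IsUnit u) (hn : ‖α^2‖ > ‖4*y*z‖)
    (heq : α^2 + 4*y*z = 2^k * u) : ‖α^2‖ = (2:ℝ)^(-(k:ℤ)) := by
  have h1 : ‖α^2 + 4*y*z‖ = ‖α^2‖ := norm_add_eq hn
  rw [heq, norm_mul, PadicInt.isUnit_iff.mp hu, mul_one, norm_two_pow] at h1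
  exact h1.symm

lemma norm_eq_unit_mul (m : ℕ) (x : ℤ_[2]) :
    ‖x‖ = (2:ℝ)^(-(m:ℤ)) ↔ ∃ a : ℤ_[2], IsUnit a ∧ x = 2^m * a := by
  rw [norm_eq_iff_dvd]
  constructor
  · rintro ⟨⟨a, rfl⟩, h2⟩
    refine ⟨a, ?_, rfl⟩
    rw [unit_iff_not_dvd]
    rintro ⟨c, rfl⟩
    exact h2 ⟨c, by ring⟩
  · rintro ⟨a, ha, rfl⟩
    refine ⟨⟨a, rfl⟩, ?_⟩
    rintro ⟨c, hc⟩
    rw [unit_iff_not_dvd] at ha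
    refine ha ⟨c, ?_⟩
    have h2 : (2:ℤ_[2])^m * a = 2^m * (2 * c) := by rw [hc]; ring
    exact mul_left_cancel₀ (pow_ne_zero m two_ne_zero) h2

lemma even_of_mem {α y z u : ℤ_[2]} {k : ℕ} (hu : IsUnit u) (hn : ‖α^2‖ > ‖4*y*z‖)
    (heq : α^2 + 4*y*z = 2^k * u) : Even k ∧ ‖α‖ = (2:ℝ)^(-((k/2 : ℕ):ℤ)) := by
  have h1 := key_norm hu hn heq
  have hα : α ≠ 0 := by
    intro h0
    rw [h0] at h1
    simp at h1
    exact (by positivity : (2:ℝ)^k ≠ 0) h1.symm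
  have hval := PadicInt.norm_eq_zpow_neg_valuation (p := 2) hα
  rw [norm_pow, hval] at h1
  rw [← zpow_natCast, ← zpow_mul] at h1
  norm_num at h1
  have h2 : α.valuation * 2 = (k:ℤ) := by
    apply zpow_right_injective₀ (by norm_num : (0:ℝ) < 2) (by norm_num : (2:ℝ) ≠ 1)
    show (2:ℝ) ^ (α.valuation * 2) = (2:ℝ) ^ (k:ℤ)
    rw [zpow_natCast]
    exact_mod_cast h1
  have hkval : (k:ℤ) = 2 * α.valuation := by linarith
  have hvnn : (0:ℤ) ≤ α.valuation := Int.natCast_nonneg _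
  constructor
  · refine ⟨α.valuation, ?_⟩
    omega
  · rw [hval]
    congr 1
    omega

lemma isUnit_sq_add {a v : ℤ_[2]} (ha : IsUnit a) (hv : (2:ℤ_[2]) ∣ v) :
    IsUnit (a^2 + v) := by
  rw [unit_iff_not_dvd]
  intro hd
  have h2 : (2:ℤ_[2]) ∣ a^2 := by
    have := dvd_sub hd hv
    simpa using this
  have hna := (unit_iff_not_dvd a).mp ha
  have hp : Prime ((2:ℕ):ℤ_[2]) := PadicInt.prime_p
  have hp2 : Prime (2:ℤ_[2]) := by exact_mod_cast hp
  exact hna (hp2.dvd_of_dvd_pow h2)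

lemma isUnit_odd {t : ℤ_[2]} : IsUnit (1 + 2*t) := by
  rw [unit_iff_not_dvd]
  rintro ⟨c, hc⟩
  have h1 : (2:ℤ_[2]) ∣ 1 := ⟨c - t, by linear_combination hc⟩
  exact (unit_iff_not_dvd 1).mp isUnit_one h1

lemma norm_lt_helper {w : ℤ_[2]} (n j : ℕ) (hjn : j < n) :
    ‖(2:ℤ_[2])^n * w‖ < (2:ℝ)^(-(j:ℤ)) := by
  calc ‖(2:ℤ_[2])^n * w‖ ≤ ‖(2:ℤ_[2])^n‖ * 1 := by
        rw [norm_mul]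
        exact mul_le_mul_of_nonneg_left (PadicInt.norm_le_one w) (norm_nonneg _)
    _ = (2:ℝ)^(-(n:ℤ)) := by rw [mul_one, norm_two_pow]
    _ < (2:ℝ)^(-(j:ℤ)) := by
        apply zpow_lt_zpow_right₀ (by norm_num)
        omega

lemma norm_sq (m : ℕ) {α : ℤ_[2]} (hα : ‖α‖ = (2:ℝ)^(-(m:ℤ))) :
    ‖α^2‖ = (2:ℝ)^(-((2*m:ℕ):ℤ)) := by
  rw [norm_pow, hα, ← zpow_natCast ((2:ℝ)^(-(m:ℤ))) 2, ← zpow_mul]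
  congr 1
  push_cast
  ring

-- extract unit divisor:  y*z = d*s  with y unit implies d ∣ z
lemma dvd_of_unit_mul {y z d s : ℤ_[2]} (hy : IsUnit y) (h : y * z = d * s) : d ∣ z := by
  rcases hy with ⟨Y, rfl⟩
  refine ⟨(↑Y⁻¹ : ℤ_[2]) * s, ?_⟩
  calc z = ((↑Y⁻¹ : ℤ_[2]) * ↑Y) * z := by rw [Units.inv_mul, one_mul]
    _ = (↑Y⁻¹ : ℤ_[2]) * (↑Y * z) := by ring
    _ = d * ((↑Y⁻¹:ℤ_[2]) * s) := by rw [h]; ring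

lemma unit_mul_odd_sub_one {y t : ℤ_[2]} (hy : IsUnit y) :
    (2:ℤ_[2]) ∣ y * (1 + 2*t) - 1 :=
  unit_sub_one_even (hy.mul isUnit_odd)

lemma set1_eq (m : ℕ) :
    {p : ℤ_[2] × ℤ_[2] × ℤ_[2] |
        IsUnit p.2.1 ∧ ‖p.1 ^ 2‖ > ‖4 * p.2.1 * p.2.2‖ ∧ ∃ u : ℤ_[2], IsUnit u ∧
          p.1 ^ 2 + 4 * p.2.1 * p.2.2 = 2 ^ (2*m) * u ∧ (8 : ℤ_[2]) ∣ u - 1}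
    = {x : ℤ_[2] | ‖x‖ = (2:ℝ)^(-(m:ℤ))} ×ˢ
      ({y : ℤ_[2] | IsUnit y} ×ˢ {z : ℤ_[2] | (2:ℤ_[2])^(2*m+1) ∣ z - 0}) := by
  ext ⟨α, y, z⟩
  simp only [Set.mem_setOf_eq, Set.mem_prod, sub_zero]
  constructor
  · rintro ⟨hy, hn, u, hu, heq, h8⟩
    have hα : ‖α‖ = (2:ℝ)^(-(m:ℤ)) := by
      have := (even_of_mem hu hn heq).2
      rwa [show (2*m)/2 = m by omega] at this
    refine ⟨hα, hy, ?_⟩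
    obtain ⟨a, ha, rfl⟩ := (norm_eq_unit_mul m α).mp hα
    obtain ⟨s, hs⟩ : (8:ℤ_[2]) ∣ u - a^2 := by
      have := dvd_sub h8 (unit_sq_sub_one ha)
      simpa using this
    have hyz : y * z = 2^(2*m+1) * s := by
      apply mul_left_cancel₀ (a := (4:ℤ_[2])) (by norm_num)
      linear_combination heq + 2^(2*m)*hs
    exact dvd_of_unit_mul hy hyz
  · rintro ⟨hα, hy, t, rfl⟩
    obtain ⟨a, ha, rfl⟩ := (norm_eq_unit_mul m α).mp hα
    refine ⟨hy, ?_, a^2 + 8*(y*t), isUnit_sq_add ha ⟨4*(y*t), by ring⟩, by ring, ?_⟩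
    · have h2 : 4*y*(2^(2*m+1)*t) = 2^(2*m+3) * (y*t) := by ring
      rw [h2, norm_sq m hα]
      exact norm_lt_helper _ _ (by omega)
    · obtain ⟨c, hc⟩ := unit_sq_sub_one ha
      exact ⟨c + y*t, by linear_combination hc⟩

lemma set5_eq (m : ℕ) :
    {p : ℤ_[2] × ℤ_[2] × ℤ_[2] |
        IsUnit p.2.1 ∧ ‖p.1 ^ 2‖ > ‖4 * p.2.1 * p.2.2‖ ∧ ∃ u : ℤ_[2], IsUnit u ∧
          p.1 ^ 2 + 4 * p.2.1 * p.2.2 = 2 ^ (2*m) * u ∧ (8 : ℤ_[2]) ∣ u - 5}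
    = {x : ℤ_[2] | ‖x‖ = (2:ℝ)^(-(m:ℤ))} ×ˢ
      ({y : ℤ_[2] | IsUnit y} ×ˢ {z : ℤ_[2] | (2:ℤ_[2])^(2*m+1) ∣ z - 2^(2*m)}) := by
  ext ⟨α, y, z⟩
  simp only [Set.mem_setOf_eq, Set.mem_prod]
  constructor
  · rintro ⟨hy, hn, u, hu, heq, h8⟩
    have hα : ‖α‖ = (2:ℝ)^(-(m:ℤ)) := by
      have := (even_of_mem hu hn heq).2
      rwa [show (2*m)/2 = m by omega] at this
    refine ⟨hα, hy, ?_⟩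
    obtain ⟨a, ha, rfl⟩ := (norm_eq_unit_mul m α).mp hα
    obtain ⟨s, hs⟩ : (8:ℤ_[2]) ∣ u - a^2 - 4 := by
      have := dvd_sub h8 (unit_sq_sub_one ha)
      have h' : u - 5 - (a^2 - 1) = u - a^2 - 4 := by ring
      rwa [h'] at this
    -- 4yz = 2^(2m)(u - a²) = 2^(2m)(4 + 8s)  ⇒  y z = 2^(2m)(1 + 2s)
    have hyz : y * z = 2^(2*m) * (1 + 2*s) := by
      apply mul_left_cancel₀ (a := (4:ℤ_[2])) (by norm_num)
      linear_combination heq + 2^(2*m)*hs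
    -- z = Y⁻¹ 2^(2m)(1+2s);  z - 2^(2m) = 2^(2m)(Y⁻¹(1+2s) - 1)
    rcases hy with ⟨Y, rfl⟩
    have hz : z = 2^(2*m) * ((↑Y⁻¹:ℤ_[2]) * (1 + 2*s)) := by
      calc z = ((↑Y⁻¹ : ℤ_[2]) * ↑Y) * z := by rw [Units.inv_mul, one_mul]
        _ = (↑Y⁻¹ : ℤ_[2]) * (↑Y * z) := by ring
        _ = 2^(2*m) * ((↑Y⁻¹:ℤ_[2]) * (1 + 2*s)) := by rw [hyz]; ring
    obtain ⟨w, hw⟩ := unit_sub_one_even ((Y⁻¹).isUnit.mul (isUnit_odd (t := s)))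
    exact ⟨w, by rw [hz]; linear_combination 2^(2*m) * hw⟩
  · rintro ⟨hα, hy, t, ht⟩
    have hz : z = 2^(2*m) * (1 + 2*t) := by linear_combination ht
    obtain ⟨a, ha, rfl⟩ := (norm_eq_unit_mul m α).mp hα
    refine ⟨hy, ?_, a^2 + 4*(y*(1+2*t)), isUnit_sq_add ha ⟨2*(y*(1+2*t)), by ring⟩,
      by rw [hz]; ring, ?_⟩
    · have h2 : 4*y*z = 2^(2*m+2) * (y*(1+2*t)) := by rw [hz]; ring
      rw [h2, norm_sq m hα]
      exact norm_lt_helper _ _ (by omega)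
    · obtain ⟨c, hc⟩ := unit_sq_sub_one ha
      obtain ⟨w, hw⟩ := unit_mul_odd_sub_one (t := t) hy
      exact ⟨c + w, by linear_combination hc + 4*hw⟩

lemma set3_eq (j : ℕ) :
    {p : ℤ_[2] × ℤ_[2] × ℤ_[2] |
        IsUnit p.2.1 ∧ ‖p.1 ^ 2‖ > ‖4 * p.2.1 * p.2.2‖ ∧ ∃ u : ℤ_[2], IsUnit u ∧
          p.1 ^ 2 + 4 * p.2.1 * p.2.2 = 2 ^ (2*(j+1)) * u ∧ (4 : ℤ_[2]) ∣ u - 3}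
    = {x : ℤ_[2] | ‖x‖ = (2:ℝ)^(-((j+1:ℕ):ℤ))} ×ˢ
      ({y : ℤ_[2] | IsUnit y} ×ˢ {z : ℤ_[2] | (2:ℤ_[2])^(2*j+2) ∣ z - 2^(2*j+1)}) := by
  ext ⟨α, y, z⟩
  simp only [Set.mem_setOf_eq, Set.mem_prod]
  constructor
  · rintro ⟨hy, hn, u, hu, heq, h4⟩
    have hα : ‖α‖ = (2:ℝ)^(-((j+1:ℕ):ℤ)) := by
      have := (even_of_mem hu hn heq).2
      rwa [show (2*(j+1))/2 = j+1 by omega] at this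
    refine ⟨hα, hy, ?_⟩
    obtain ⟨a, ha, rfl⟩ := (norm_eq_unit_mul (j+1) α).mp hα
    obtain ⟨s, hs⟩ : (4:ℤ_[2]) ∣ u - a^2 - 2 := by
      obtain ⟨c, hc⟩ := unit_sq_sub_one ha
      obtain ⟨d, hd⟩ := h4
      exact ⟨d - 2*c, by linear_combination hd - hc⟩
    -- 4yz = 2^(2j+2)(2 + 4s) ⇒ y z = 2^(2j+1)(1 + 2s)
    have hyz : y * z = 2^(2*j+1) * (1 + 2*s) := by
      apply mul_left_cancel₀ (a := (4:ℤ_[2])) (by norm_num)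
      linear_combination heq + 2^(2*(j+1))*hs
    rcases hy with ⟨Y, rfl⟩
    have hz : z = 2^(2*j+1) * ((↑Y⁻¹:ℤ_[2]) * (1 + 2*s)) := by
      calc z = ((↑Y⁻¹ : ℤ_[2]) * ↑Y) * z := by rw [Units.inv_mul, one_mul]
        _ = (↑Y⁻¹ : ℤ_[2]) * (↑Y * z) := by ring
        _ = 2^(2*j+1) * ((↑Y⁻¹:ℤ_[2]) * (1 + 2*s)) := by rw [hyz]; ring
    obtain ⟨w, hw⟩ := unit_sub_one_even ((Y⁻¹).isUnit.mul (isUnit_odd (t := s)))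
    exact ⟨w, by rw [hz]; linear_combination 2^(2*j+1) * hw⟩
  · rintro ⟨hα, hy, t, ht⟩
    have hz : z = 2^(2*j+1) * (1 + 2*t) := by linear_combination ht
    obtain ⟨a, ha, rfl⟩ := (norm_eq_unit_mul (j+1) α).mp hα
    refine ⟨hy, ?_, a^2 + 2*(y*(1+2*t)), isUnit_sq_add ha ⟨y*(1+2*t), by ring⟩,
      by rw [hz]; ring, ?_⟩
    · have h2 : 4*y*z = 2^(2*j+3) * (y*(1+2*t)) := by rw [hz]; ring
      rw [h2, norm_sq (j+1) hα]
      exact norm_lt_helper _ _ (by omega)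
    · obtain ⟨c, hc⟩ := unit_sq_sub_one ha
      obtain ⟨w, hw⟩ := unit_mul_odd_sub_one (t := t) hy
      exact ⟨2*c + w, by linear_combination hc + 2*hw⟩

lemma set3_zero_empty :
    {p : ℤ_[2] × ℤ_[2] × ℤ_[2] |
        IsUnit p.2.1 ∧ ‖p.1 ^ 2‖ > ‖4 * p.2.1 * p.2.2‖ ∧ ∃ u : ℤ_[2], IsUnit u ∧
          p.1 ^ 2 + 4 * p.2.1 * p.2.2 = 2 ^ (0:ℕ) * u ∧ (4 : ℤ_[2]) ∣ u - 3}
    = ∅ := by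
  ext ⟨α, y, z⟩
  simp only [Set.mem_setOf_eq, Set.mem_empty_iff_false, iff_false]
  rintro ⟨hy, hn, u, hu, heq, h4⟩
  have hα : ‖α‖ = (2:ℝ)^(-((0:ℕ):ℤ)) := by
    have := (even_of_mem hu hn heq).2
    rwa [show (0:ℕ)/2 = 0 by omega] at this
  obtain ⟨a, ha, rfl⟩ := (norm_eq_unit_mul 0 α).mp hα
  obtain ⟨c, hc⟩ := unit_sq_sub_one ha
  obtain ⟨d, hd⟩ := h4
  -- u = a² + 4yz (from heq, 2^0 = 1), so 4 ∣ (u - 3) gives 4 ∣ 4yz - 2 + (a²-1)... derive 2 ∣ 1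
  have h1 : (2:ℤ_[2]) ∣ 1 := ⟨y*z - d + 2*c,
    mul_left_cancel₀ (two_ne_zero : (2:ℤ_[2]) ≠ 0) (by linear_combination -hd + hc - heq)⟩
  exact (unit_iff_not_dvd 1).mp isUnit_one h1

lemma meas_units (μ : Measure ℤ_[2]) [μ.IsAddHaarMeasure] [IsProbabilityMeasure μ] :
    μ {y : ℤ_[2] | IsUnit y} = ((2:ℝ≥0∞)^(0+1))⁻¹ := by
  have h : {y : ℤ_[2] | IsUnit y} = {x : ℤ_[2] | ‖x‖ = (2:ℝ)^(-((0:ℕ):ℤ))} := by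
    ext x
    simp [PadicInt.isUnit_iff]
  rw [h, meas_sphere]

lemma odd_empty (k : ℕ) (hk : ¬ Even k) :
    {p : ℤ_[2] × ℤ_[2] × ℤ_[2] |
        IsUnit p.2.1 ∧ ‖p.1 ^ 2‖ > ‖4 * p.2.1 * p.2.2‖ ∧ ∃ u : ℤ_[2], IsUnit u ∧
          p.1 ^ 2 + 4 * p.2.1 * p.2.2 = 2 ^ k * u} = ∅ := by
  ext ⟨α, y, z⟩
  simp only [Set.mem_setOf_eq, Set.mem_empty_iff_false, iff_false]
  rintro ⟨hy, hn, u, hu, heq⟩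
  exact hk (even_of_mem hu hn heq).1

/-- Lemma 6.3 (the case `v₂(α²) < v₂(4yz)`, expressed as `‖α²‖ > ‖4yz‖`): for the Haar
probability measure `μ` on `ℤ_[2]`, among triples `(α, y, z)` with `y` a unit,
`‖α²‖ > ‖4yz‖` and `α² + 4yz = 2^k·u` for a unit `u`:
(1) with `u ≡ 1 (mod 8)`, the `μ³`-measure is `2^{-(3k/2+3)}` for even `k` and `0` for odd `k`;
(2) with `u ≡ 5 (mod 8)`, the `μ³`-measure is `2^{-(3k/2+3)}` for even `k` and `0` for odd `k`;
(3) with `u ≡ 3 (mod 4)`, the `μ³`-measure is `2^{-(3k/2+2)}` for even `k ≥ 2`, and `0`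
for odd `k` or `k = 0`;
(4) with no constraint on `u`, the `μ³`-measure is `0` whenever `k` is odd. -/
theorem stmt4 (k : ℕ)
    (μ : Measure ℤ_[2]) [μ.IsAddHaarMeasure] [IsProbabilityMeasure μ] :
    (μ.prod (μ.prod μ)) {p : ℤ_[2] × ℤ_[2] × ℤ_[2] |
        IsUnit p.2.1 ∧ ‖p.1 ^ 2‖ > ‖4 * p.2.1 * p.2.2‖ ∧ ∃ u : ℤ_[2], IsUnit u ∧
          p.1 ^ 2 + 4 * p.2.1 * p.2.2 = 2 ^ k * u ∧ (8 : ℤ_[2]) ∣ u - 1}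
      = (if Even k then ((2 : ℝ≥0∞) ^ (3 * k / 2 + 3))⁻¹ else 0) ∧
    (μ.prod (μ.prod μ)) {p : ℤ_[2] × ℤ_[2] × ℤ_[2] |
        IsUnit p.2.1 ∧ ‖p.1 ^ 2‖ > ‖4 * p.2.1 * p.2.2‖ ∧ ∃ u : ℤ_[2], IsUnit u ∧
          p.1 ^ 2 + 4 * p.2.1 * p.2.2 = 2 ^ k * u ∧ (8 : ℤ_[2]) ∣ u - 5}
      = (if Even k then ((2 : ℝ≥0∞) ^ (3 * k / 2 + 3))⁻¹ else 0) ∧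
    (μ.prod (μ.prod μ)) {p : ℤ_[2] × ℤ_[2] × ℤ_[2] |
        IsUnit p.2.1 ∧ ‖p.1 ^ 2‖ > ‖4 * p.2.1 * p.2.2‖ ∧ ∃ u : ℤ_[2], IsUnit u ∧
          p.1 ^ 2 + 4 * p.2.1 * p.2.2 = 2 ^ k * u ∧ (4 : ℤ_[2]) ∣ u - 3}
      = (if Even k ∧ 2 ≤ k then ((2 : ℝ≥0∞) ^ (3 * k / 2 + 2))⁻¹ else 0) ∧
    (Odd k →
      (μ.prod (μ.prod μ)) {p : ℤ_[2] × ℤ_[2] × ℤ_[2] |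
          IsUnit p.2.1 ∧ ‖p.1 ^ 2‖ > ‖4 * p.2.1 * p.2.2‖ ∧ ∃ u : ℤ_[2], IsUnit u ∧
            p.1 ^ 2 + 4 * p.2.1 * p.2.2 = 2 ^ k * u}
        = 0) := by
  have hodd : ∀ (hk : ¬ Even k) (S : Set (ℤ_[2] × ℤ_[2] × ℤ_[2])),
      (S ⊆ {p : ℤ_[2] × ℤ_[2] × ℤ_[2] |
          IsUnit p.2.1 ∧ ‖p.1 ^ 2‖ > ‖4 * p.2.1 * p.2.2‖ ∧ ∃ u : ℤ_[2], IsUnit u ∧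
            p.1 ^ 2 + 4 * p.2.1 * p.2.2 = 2 ^ k * u}) → (μ.prod (μ.prod μ)) S = 0 := by
    intro hk S hS
    apply measure_mono_null hS
    rw [odd_empty k hk]
    exact measure_empty
  refine ⟨?_, ?_, ?_, ?_⟩
  · by_cases hk : Even k
    · rw [if_pos hk]
      obtain ⟨m, rfl⟩ := hk
      simp only [show m + m = 2*m from (two_mul m).symm]
      rw [set1_eq m, Measure.prod_prod, Measure.prod_prod, meas_sphere, meas_units, meas_coset,
        ENNReal.inv_pow, ENNReal.inv_pow, ENNReal.inv_pow, ENNReal.inv_pow,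
        ← pow_add, ← pow_add]
      congr 1
      omega
    · rw [if_neg hk]
      exact hodd hk _ (fun p hp => ⟨hp.1, hp.2.1, hp.2.2.choose,
        hp.2.2.choose_spec.1, hp.2.2.choose_spec.2.1⟩)
  · by_cases hk : Even k
    · rw [if_pos hk]
      obtain ⟨m, rfl⟩ := hk
      simp only [show m + m = 2*m from (two_mul m).symm]
      rw [set5_eq m, Measure.prod_prod, Measure.prod_prod, meas_sphere, meas_units, meas_coset,
        ENNReal.inv_pow, ENNReal.inv_pow, ENNReal.inv_pow, ENNReal.inv_pow,
        ← pow_add, ← pow_add]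
      congr 1
      omega
    · rw [if_neg hk]
      exact hodd hk _ (fun p hp => ⟨hp.1, hp.2.1, hp.2.2.choose,
        hp.2.2.choose_spec.1, hp.2.2.choose_spec.2.1⟩)
  · by_cases hk : Even k ∧ 2 ≤ k
    · rw [if_pos hk]
      obtain ⟨⟨m, rfl⟩, h2⟩ := hk
      obtain ⟨j, rfl⟩ : ∃ j, m = j + 1 := ⟨m - 1, by omega⟩
      simp only [show j + 1 + (j + 1) = 2*(j+1) from by ring]
      rw [set3_eq j, Measure.prod_prod, Measure.prod_prod, meas_sphere, meas_units, meas_coset,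
        ENNReal.inv_pow, ENNReal.inv_pow, ENNReal.inv_pow, ENNReal.inv_pow,
        ← pow_add, ← pow_add]
      congr 1
      omega
    · rw [if_neg hk]
      by_cases hke : Even k
      · have hk0 : k = 0 := by
          rcases hke with ⟨m, rfl⟩
          by_contra h0
          exact hk ⟨⟨m, rfl⟩, by omega⟩
        subst hk0
        rw [show (2:ℤ_[2])^(0:ℕ) = 2^(0:ℕ) from rfl]
        rw [set3_zero_empty]
        exact measure_empty
      · exact hodd hke _ (fun p hp => ⟨hp.1, hp.2.1, hp.2.2.choose,
          hp.2.2.choose_spec.1, hp.2.2.choose_spec.2.1⟩)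
  · intro hk
    rw [odd_empty k ((Nat.not_even_iff_odd.mpr hk))]
    exact measure_empty
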